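/- Let I be an independence system on finite ground set E with nonnegative weights w. If for every bit-function (a weight function whose values are integer powers of 2) every lexicographically maximal independent set S satisfies w(S_k) = OPT_k for all k, then for every bit-function the function k ↦ OPT_k is concave. -/

import Mathlib

/-- The weights of the elements of `S`, sorted in decreasing order. -/
noncomputable def sortedDesc {E : Type*} (w : E → ℝ) (S : Finset E) : List ℝ :=
  (S.val.map w).sort (· ≥ ·)

/-- `w(S_k)`: the total weight of the `k` heaviest elements of `S`. -/
noncomputable def wTop {E : Type*} (w : E → ℝ) (k : ℕ) (S : Finset E) : ℝ :=
  ((sortedDesc w S).take k).sum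

/-- `S` is `w`-lexicographically larger than `T`: the decreasing weight sequence of `T`
is lexicographically smaller than that of `S`. -/
def LexGt {E : Type*} (w : E → ℝ) (S T : Finset E) : Prop :=
  List.Lex (· < ·) (sortedDesc w T) (sortedDesc w S)

/-- `S` is a lexicographically maximal independent set of the system `I`. -/
def LexMaximal {E : Type*} (I : Finset E → Prop) (w : E → ℝ) (S : Finset E) : Prop :=
  I S ∧ ∀ T, I T → ¬ LexGt w T S

/-- A bit-function: all weights are integer powers of `2`. -/
def IsBitFunction {E : Type*} (w : E → ℝ) : Prop := ∀ e, ∃ ℓ : ℤ, w e = 2 ^ ℓ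

/-- If, for every bit-function, every lexicographically maximal independent set `S`
satisfies `w(S_k) = OPT_k` for all `k` (i.e. the system is good), then for every
bit-function the map `k ↦ OPT_k` is concave. -/

lemma take_concave (l : List ℝ) (hs : l.Pairwise (· ≥ ·)) (hpos : ∀ x ∈ l, 0 ≤ x) (k : ℕ) :
    (l.take k).sum + (l.take (k+2)).sum ≤ 2 * (l.take (k+1)).sum := by
  rcases lt_or_ge (k+1) l.length with h | h
  · have h0 : k < l.length := by omega
    rw [List.sum_take_succ _ _ h, List.sum_take_succ _ _ h0]
    have hle : l.get ⟨k+1, h⟩ ≤ l.get ⟨k, h0⟩ :=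
      hs.rel_get_of_lt (by simp [Fin.lt_def])
    simp only [List.get_eq_getElem] at hle
    linarith
  · rw [List.take_of_length_le (by omega : l.length ≤ k+2),
        List.take_of_length_le h]
    have h1 : (l.take k).sum ≤ l.sum := by
      have := List.sum_take_add_sum_drop l k
      have h2 : (0:ℝ) ≤ (l.drop k).sum :=
        List.sum_nonneg (fun x hx => hpos x (List.mem_of_mem_drop hx))
      linarith
    linarith

lemma exists_lexMaximal {E : Type*} [Fintype E] [DecidableEq E]
    (I : Finset E → Prop) (hne : I ∅) (w : E → ℝ) :
    ∃ S, LexMaximal I w S := by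
  classical
  obtain ⟨S, hS, hmax⟩ := Finset.exists_max_image (Finset.univ.filter I)
    (fun T => sortedDesc w T) ⟨∅, by simp [hne]⟩
  refine ⟨S, (Finset.mem_filter.mp hS).2, fun T hT hlex => ?_⟩
  have hle : sortedDesc w T ≤ sortedDesc w S :=
    hmax T (Finset.mem_filter.mpr ⟨Finset.mem_univ T, hT⟩)
  have : sortedDesc w S < sortedDesc w T := hlex
  exact absurd hle (not_le.mpr this)

theorem stmt_7 {E : Type*} [Fintype E] [DecidableEq E]
    (I : Finset E → Prop) (hne : I ∅) (hdc : ∀ S T : Finset E, S ⊆ T → I T → I S)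
    (hgood : ∀ w : E → ℝ, IsBitFunction w → ∀ S : Finset E, LexMaximal I w S →
      ∀ k, IsGreatest {x : ℝ | ∃ T : Finset E, I T ∧ T.card ≤ k ∧ x = ∑ e ∈ T, w e}
        (wTop w k S)) :
    ∀ w : E → ℝ, IsBitFunction w → ∀ OPT : ℕ → ℝ,
      (∀ k, IsGreatest {x : ℝ | ∃ T : Finset E, I T ∧ T.card ≤ k ∧ x = ∑ e ∈ T, w e}
        (OPT k)) →
      ∀ k, OPT k + OPT (k + 2) ≤ 2 * OPT (k + 1) := by
  intro w hw OPT hOPT k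
  obtain ⟨S, hS⟩ := exists_lexMaximal I hne w
  have hk : ∀ j, OPT j = wTop w j S := fun j => (hOPT j).unique (hgood w hw S hS j)
  rw [hk k, hk (k+1), hk (k+2)]
  have hsorted : (sortedDesc w S).Pairwise (· ≥ ·) := Multiset.pairwise_sort _ _
  have hpos : ∀ x ∈ sortedDesc w S, (0:ℝ) ≤ x := by
    intro x hx
    rw [sortedDesc, Multiset.mem_sort] at hx
    obtain ⟨e, _, rfl⟩ := Multiset.mem_map.mp hx
    obtain ⟨ℓ, h⟩ := hw e
    rw [h]; positivity
  exact take_concave _ hsorted hpos k
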